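/- Let H be a digraph in which the vertices are partitioned into two classes by a 2-colouring h such that any two distinct vertices of H sharing a common out-neighbour of in-degree 2 receive different colours under h. Suppose x is a vertex of H of in-degree exactly 2 with in-neighbours y and z, and Δ⁻(H) = 2. Let S be a monotone t-in-2t-SAT instance and G the digraph with a vertex u_ℓ for each variable ℓ, a vertex v_c for each clause c, and an arc u_ℓ → v_c whenever ℓ ∈ c. Then G has a t-frugal homomorphism to H if and only if S has an assignment with exactly t true variables in every clause. -/
import Mathlib

lemma frugal_aux_le {α β : Type*} [Finite β] {P : Finset α} {Q : β → Prop}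
    (g : α → β) (hg : ∀ ℓ ∈ P, Q (g ℓ)) (hinj : Set.InjOn g P) :
    P.card ≤ Nat.card {b : β // Q b} := by
  rw [← Nat.card_eq_finsetCard]
  have hi : Function.Injective
      (fun ℓ : {ℓ // ℓ ∈ P} => (⟨g ℓ.1, hg ℓ.1 ℓ.2⟩ : {b // Q b})) := by
    rintro ⟨a, ha⟩ ⟨b, hb⟩ hab
    simp only [Subtype.mk.injEq] at hab ⊢
    exact hinj ha hb hab
  exact Nat.card_le_card_of_injective _ hi

lemma frugal_aux_ge {α β : Type*} [Finite α] {P : Finset α} {Q : β → Prop}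
    (g : α → β) (hg : ∀ ℓ ∈ P, Q (g ℓ)) (hsurj : ∀ b, Q b → ∃ ℓ ∈ P, g ℓ = b) :
    Nat.card {b : β // Q b} ≤ P.card := by
  rw [← Nat.card_eq_finsetCard]
  refine Nat.card_le_card_of_surjective
    (fun ℓ : {ℓ // ℓ ∈ P} => (⟨g ℓ.1, hg ℓ.1 ℓ.2⟩ : {b // Q b})) ?_
  rintro ⟨b, hb⟩
  obtain ⟨ℓ, hℓ, rfl⟩ := hsurj b hb
  exact ⟨⟨ℓ, hℓ⟩, rfl⟩

/-- `H` (arcs `B`) has maximum in-degree 2, witnessed by a vertex `x` of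
in-degree exactly 2 with in-neighbours `y ≠ z`, and admits a 2-colouring `h` such that
distinct vertices sharing a common out-neighbour of in-degree 2 get different colours.
`S` is a monotone t-in-2t-SAT instance with clause family `C` (each clause of size `2t`),
and `G` is the digraph on `V ⊕ Finset V` with an arc `Sum.inl ℓ → Sum.inr c` exactly when
`c ∈ C` and `ℓ ∈ c`.  Then `G` has a `t`-frugal homomorphism to `H` iff `S` has an
assignment with exactly `t` true variables in every clause. -/
theorem frugal_iff_t_in_2t {V W : Type*} [Fintype V] [DecidableEq V] [Finite W]
    (B : W → W → Prop) (t : ℕ) (ht : 1 ≤ t)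
    (C : Finset (Finset V)) (hcard : ∀ c ∈ C, c.card = 2 * t)
    (h : W → Bool)
    (hcol : ∀ u v : W, u ≠ v →
      (∃ s, B u s ∧ B v s ∧ Nat.card {p : W // B p s} = 2) → h u ≠ h v)
    (x y z : W) (hyx : B y x) (hzx : B z x) (hyz : y ≠ z)
    (hx2 : Nat.card {p : W // B p x} = 2)
    (hΔ : ∀ v : W, Nat.card {p : W // B p v} ≤ 2) :
    (∃ f : V ⊕ Finset V → W,
      (∀ a b : V ⊕ Finset V,
        (∃ ℓ c, a = Sum.inl ℓ ∧ b = Sum.inr c ∧ c ∈ C ∧ ℓ ∈ c) → B (f a) (f b)) ∧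
      (∀ (b : V ⊕ Finset V) (w : W),
        Nat.card {a : V ⊕ Finset V //
          (∃ ℓ c, a = Sum.inl ℓ ∧ b = Sum.inr c ∧ c ∈ C ∧ ℓ ∈ c) ∧ f a = w} ≤ t)) ↔
    (∃ σ : V → Bool, ∀ c ∈ C, (c.filter (fun v => σ v = true)).card = t) := by
  classical
  have : Fintype W := Fintype.ofFinite W
  constructor
  · rintro ⟨f, hhom, hfrug⟩
    refine ⟨fun ℓ => h (f (Sum.inl ℓ)), fun c hc => ?_⟩
    set s := f (Sum.inr c) with hs
    set N : Finset W := Finset.univ.filter (fun w => B w s) with hNdef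
    have hNcard : Nat.card {p : W // B p s} = N.card := by
      rw [← Nat.card_eq_finsetCard]
      exact Nat.card_congr (Equiv.subtypeEquivRight (by simp [hNdef]))
    have hmem : ∀ ℓ ∈ c, f (Sum.inl ℓ) ∈ N := by
      intro ℓ hl
      simp only [hNdef, Finset.mem_filter, Finset.mem_univ, true_and]
      exact hhom _ _ ⟨ℓ, c, rfl, rfl, hc, hl⟩
    set g : W → Finset V := fun w => c.filter (fun ℓ => f (Sum.inl ℓ) = w) with hgdef
    have hle : ∀ w : W, (g w).card ≤ t := by
      intro w
      refine le_trans (frugal_aux_le (Q := fun a =>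
        (∃ ℓ c', a = Sum.inl ℓ ∧ (Sum.inr c : V ⊕ Finset V) = Sum.inr c' ∧ c' ∈ C ∧ ℓ ∈ c') ∧ f a = w)
        Sum.inl ?_ ?_) (hfrug (Sum.inr c) w)
      · intro ℓ hℓ
        simp only [hgdef, Finset.mem_filter] at hℓ
        exact ⟨⟨ℓ, c, rfl, rfl, hc, hℓ.1⟩, hℓ.2⟩
      · exact fun a _ b _ hab => Sum.inl.inj hab
    have hsubset : c ⊆ N.biUnion g := by
      intro ℓ hl
      exact Finset.mem_biUnion.2 ⟨f (Sum.inl ℓ), hmem ℓ hl, by simp [hgdef, hl]⟩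
    have hbound : 2 * t ≤ N.card * t := by
      calc 2 * t = c.card := (hcard c hc).symm
        _ ≤ (N.biUnion g).card := Finset.card_le_card hsubset
        _ ≤ ∑ w ∈ N, (g w).card := Finset.card_biUnion_le
        _ ≤ ∑ _w ∈ N, t := Finset.sum_le_sum (fun w _ => hle w)
        _ = N.card * t := by rw [Finset.sum_const, smul_eq_mul]
    have hN2 : N.card = 2 := by
      have h1 : 2 ≤ N.card := Nat.le_of_mul_le_mul_right hbound (by omega)
      have h2 : N.card ≤ 2 := by rw [← hNcard]; exact hΔ s
      omega
    obtain ⟨w1, w2, hw12, hNeq⟩ := Finset.card_eq_two.1 hN2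
    have hBw1 : B w1 s := by
      have : w1 ∈ N := by rw [hNeq]; simp
      simpa [hNdef] using this
    have hBw2 : B w2 s := by
      have : w2 ∈ N := by rw [hNeq]; simp
      simpa [hNdef] using this
    have hcolor : h w1 ≠ h w2 :=
      hcol w1 w2 hw12 ⟨s, hBw1, hBw2, by rw [hNcard, hN2]⟩
    have hunion : c ⊆ g w1 ∪ g w2 := by
      intro ℓ hl
      have := hmem ℓ hl
      rw [hNeq] at this
      rcases Finset.mem_insert.1 this with h1 | h1
      · exact Finset.mem_union_left _ (by simp [hgdef, hl, h1])
      · exact Finset.mem_union_right _ (by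
          simp only [Finset.mem_singleton] at h1
          simp [hgdef, hl, h1])
    have hsum : 2 * t ≤ (g w1).card + (g w2).card := by
      calc 2 * t = c.card := (hcard c hc).symm
        _ ≤ (g w1 ∪ g w2).card := Finset.card_le_card hunion
        _ ≤ (g w1).card + (g w2).card := Finset.card_union_le _ _
    have ht1 : (g w1).card = t := by have := hle w1; have := hle w2; omega
    have ht2 : (g w2).card = t := by have := hle w1; have := hle w2; omega
    have key : ∀ ℓ ∈ c, f (Sum.inl ℓ) = w1 ∨ f (Sum.inl ℓ) = w2 := by
      intro ℓ hl
      have := hmem ℓ hl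
      rw [hNeq] at this
      simpa using this
    by_cases hw1t : h w1 = true
    · have hw2f : h w2 = false := by
        cases hb : h w2
        · rfl
        · exact absurd (hw1t.trans hb.symm) hcolor
      have hfeq : c.filter (fun v => h (f (Sum.inl v)) = true) = g w1 := by
        ext ℓ
        simp only [Finset.mem_filter, hgdef]
        constructor
        · rintro ⟨hl, hh⟩
          refine ⟨hl, ?_⟩
          rcases key ℓ hl with h1 | h1
          · exact h1
          · rw [h1, hw2f] at hh; exact absurd hh (by simp)
        · rintro ⟨hl, hfl⟩
          exact ⟨hl, by rw [hfl, hw1t]⟩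
      simpa [hfeq] using ht1
    · have hw1f : h w1 = false := by simpa using hw1t
      have hw2t : h w2 = true := by
        cases hb : h w2
        · exact absurd (hw1f.trans hb.symm) hcolor
        · rfl
      have hfeq : c.filter (fun v => h (f (Sum.inl v)) = true) = g w2 := by
        ext ℓ
        simp only [Finset.mem_filter, hgdef]
        constructor
        · rintro ⟨hl, hh⟩
          refine ⟨hl, ?_⟩
          rcases key ℓ hl with h1 | h1
          · rw [h1, hw1f] at hh; exact absurd hh (by simp)
          · exact h1
        · rintro ⟨hl, hfl⟩
          exact ⟨hl, by rw [hfl, hw2t]⟩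
      simpa [hfeq] using ht2
  · rintro ⟨σ, hσ⟩
    refine ⟨Sum.elim (fun ℓ => if σ ℓ then y else z) (fun _ => x), ?_, ?_⟩
    · rintro a b ⟨ℓ, c, rfl, rfl, hc, hl⟩
      simp only [Sum.elim_inl, Sum.elim_inr]
      split_ifs
      · exact hyx
      · exact hzx
    · intro b w
      cases b with
      | inl v =>
        have he : IsEmpty {a : V ⊕ Finset V //
            (∃ ℓ c, a = Sum.inl ℓ ∧ Sum.inl v = Sum.inr c ∧ c ∈ C ∧ ℓ ∈ c) ∧
              Sum.elim (fun ℓ => if σ ℓ then y else z) (fun _ => x) a = w} := by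
          constructor
          rintro ⟨a, ⟨ℓ, c, _, hbc, _⟩, _⟩
          exact Sum.inl_ne_inr hbc
        rw [Nat.card_of_isEmpty]
        omega
      | inr c =>
        by_cases hc : c ∈ C
        · set P : Finset V := c.filter (fun ℓ => (if σ ℓ then y else z) = w) with hPdef
          have hge : Nat.card {a : V ⊕ Finset V //
              (∃ ℓ c', a = Sum.inl ℓ ∧ (Sum.inr c : V ⊕ Finset V) = Sum.inr c' ∧ c' ∈ C ∧ ℓ ∈ c') ∧
                Sum.elim (fun ℓ => if σ ℓ then y else z) (fun _ => x) a = w} ≤ P.card := by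
            refine frugal_aux_ge (Q := fun a =>
              (∃ ℓ c', a = Sum.inl ℓ ∧ (Sum.inr c : V ⊕ Finset V) = Sum.inr c' ∧ c' ∈ C ∧ ℓ ∈ c') ∧
                Sum.elim (fun ℓ => if σ ℓ then y else z) (fun _ => x) a = w)
              Sum.inl ?_ ?_
            · intro ℓ hℓ
              simp only [hPdef, Finset.mem_filter] at hℓ
              exact ⟨⟨ℓ, c, rfl, rfl, hc, hℓ.1⟩, hℓ.2⟩
            · rintro a ⟨⟨ℓ, c', ha, hbc, hcC, hlc⟩, hfa⟩
              subst ha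
              have hcc : c' = c := (Sum.inr.inj hbc).symm
              subst hcc
              refine ⟨ℓ, ?_, rfl⟩
              simp only [Sum.elim_inl] at hfa
              simp [hPdef, hlc, hfa]
          refine hge.trans ?_
          have hfil := Finset.card_filter_add_card_filter_not
            (s := c) (p := fun v => σ v = true)
          have htrue := hσ c hc
          have hcc := hcard c hc
          by_cases hwy : w = y
          · have hP : P = c.filter (fun v => σ v = true) := by
              subst hwy
              ext ℓ
              simp only [hPdef, Finset.mem_filter, and_congr_right_iff]
              intro _
              constructor
              · intro hif
                by_contra hσℓ
                rw [if_neg hσℓ] at hif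
                exact hyz hif.symm
              · intro hσℓ; simp [hσℓ]
            rw [hP, htrue]
          · by_cases hwz : w = z
            · have hP : P = c.filter (fun v => ¬ σ v = true) := by
                subst hwz
                ext ℓ
                simp only [hPdef, Finset.mem_filter, and_congr_right_iff]
                intro _
                constructor
                · intro hif hσℓ
                  rw [if_pos hσℓ] at hif
                  exact hyz hif
                · intro hσℓ; simp [hσℓ]
              rw [hP]; omega
            · have hP : P = ∅ := by
                ext ℓ
                simp only [hPdef, Finset.mem_filter, Finset.notMem_empty, iff_false, not_and]
                intro _ hif
                by_cases hσℓ : σ ℓ = true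
                · rw [if_pos hσℓ] at hif; exact hwy hif.symm
                · rw [if_neg hσℓ] at hif; exact hwz hif.symm
              rw [hP]; simp
        · have he : IsEmpty {a : V ⊕ Finset V //
              (∃ ℓ c', a = Sum.inl ℓ ∧ (Sum.inr c : V ⊕ Finset V) = Sum.inr c' ∧ c' ∈ C ∧ ℓ ∈ c') ∧
                Sum.elim (fun ℓ => if σ ℓ then y else z) (fun _ => x) a = w} := by
            constructor
            rintro ⟨a, ⟨ℓ, c', ha, hbc, hcC, hlc⟩, _⟩
            exact hc (Sum.inr.inj hbc ▸ hcC)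
          rw [Nat.card_of_isEmpty]
          omega
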